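/- Sum-rate converse: if M1, M2 are independent messages with entropies nR1, nR2, H(M2 | Y^n) ≤ nε and H(M1 | Y^n, M2) ≤ nε, and (M1, M2, Y^{i-1}) → X_i → Y_i is Markov for each i with Y_i = f(X_i) deterministic, then n(R1 + R2) ≤ Σ_{i=1}^n H(Y_i) + 2nε. -/
import Mathlib


open scoped Classical BigOperators

namespace SecBC

variable {Ω : Type*} [Fintype Ω]

/-- Probability that the random variable `X` takes value `a`, under pmf `p` on `Ω`. -/
noncomputable def prob (p : Ω → ℝ) {A : Type*} [Fintype A] [DecidableEq A]
    (X : Ω → A) (a : A) : ℝ := ∑ ω, if X ω = a then p ω else 0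

/-- Shannon entropy of a random variable. -/
noncomputable def ent (p : Ω → ℝ) {A : Type*} [Fintype A] [DecidableEq A]
    (X : Ω → A) : ℝ := -∑ a, prob p X a * Real.log (prob p X a)

/-- Conditional Shannon entropy `H(X | Y)`. -/
noncomputable def condEnt (p : Ω → ℝ) {A B : Type*} [Fintype A] [DecidableEq A]
    [Fintype B] [DecidableEq B] (X : Ω → A) (Y : Ω → B) : ℝ :=
  ent p (fun ω => (X ω, Y ω)) - ent p Y

/-- Mutual information `I(X ; Y)`. -/
noncomputable def mutInfo (p : Ω → ℝ) {A B : Type*} [Fintype A] [DecidableEq A]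
    [Fintype B] [DecidableEq B] (X : Ω → A) (Y : Ω → B) : ℝ :=
  ent p X + ent p Y - ent p (fun ω => (X ω, Y ω))

/-- Conditional mutual information `I(X ; Y | Z)`. -/
noncomputable def condMutInfo (p : Ω → ℝ) {A B C : Type*} [Fintype A] [DecidableEq A]
    [Fintype B] [DecidableEq B] [Fintype C] [DecidableEq C]
    (X : Ω → A) (Y : Ω → B) (Z : Ω → C) : ℝ :=
  condEnt p X Z + condEnt p Y Z - condEnt p (fun ω => (X ω, Y ω)) Z

/-- Independence of two random variables. -/
def IndepRV (p : Ω → ℝ) {A B : Type*} [Fintype A] [DecidableEq A]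
    [Fintype B] [DecidableEq B] (X : Ω → A) (Y : Ω → B) : Prop :=
  ∀ a b, prob p (fun ω => (X ω, Y ω)) (a, b) = prob p X a * prob p Y b

/-- Markov chain `X → Y → Z`: conditional independence of `X` and `Z` given `Y`. -/
def MarkovChain (p : Ω → ℝ) {A B C : Type*} [Fintype A] [DecidableEq A]
    [Fintype B] [DecidableEq B] [Fintype C] [DecidableEq C]
    (X : Ω → A) (Y : Ω → B) (Z : Ω → C) : Prop :=
  ∀ a b c, prob p (fun ω => (X ω, Y ω, Z ω)) (a, b, c) * prob p Y b
    = prob p (fun ω => (X ω, Y ω)) (a, b) * prob p (fun ω => (Y ω, Z ω)) (b, c)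

/-- `p` is a probability mass function on the finite sample space `Ω`. -/
structure IsPMF (p : Ω → ℝ) : Prop where
  nonneg : ∀ ω, 0 ≤ p ω
  sum_one : ∑ ω, p ω = 1

section Aux

set_option linter.unusedSectionVars false

variable {p : Ω → ℝ} {A B C : Type*} [Fintype A] [DecidableEq A]
  [Fintype B] [DecidableEq B] [Fintype C] [DecidableEq C]

lemma prob_nonneg (hp : IsPMF p) (X : Ω → A) (a : A) : 0 ≤ prob p X a :=
  Finset.sum_nonneg fun ω _ => by split <;> simp [hp.nonneg ω]

lemma sum_prob (hp : IsPMF p) (X : Ω → A) : ∑ a, prob p X a = 1 := by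
  rw [← hp.sum_one]
  unfold prob
  rw [Finset.sum_comm]
  exact Finset.sum_congr rfl fun ω _ => by simp

lemma marginal_fst (X : Ω → A) (Y : Ω → B) (a : A) :
    ∑ b, prob p (fun ω => (X ω, Y ω)) (a, b) = prob p X a := by
  unfold prob
  rw [Finset.sum_comm]
  refine Finset.sum_congr rfl fun ω _ => ?_
  by_cases h : X ω = a <;> simp [Prod.ext_iff, h]

lemma marginal_snd (X : Ω → A) (Y : Ω → B) (b : B) :
    ∑ a, prob p (fun ω => (X ω, Y ω)) (a, b) = prob p Y b := by
  unfold prob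
  rw [Finset.sum_comm]
  refine Finset.sum_congr rfl fun ω _ => ?_
  by_cases h : Y ω = b <;> simp [Prod.ext_iff, h]

lemma prob_pair_le_fst (hp : IsPMF p) (X : Ω → A) (Y : Ω → B) (a : A) (b : B) :
    prob p (fun ω => (X ω, Y ω)) (a, b) ≤ prob p X a := by
  rw [← marginal_fst X Y a]
  exact Finset.single_le_sum (f := fun b' => prob p (fun ω => (X ω, Y ω)) (a, b'))
    (fun b' _ => prob_nonneg hp _ _) (Finset.mem_univ b)

lemma prob_pair_le_snd (hp : IsPMF p) (X : Ω → A) (Y : Ω → B) (a : A) (b : B) :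
    prob p (fun ω => (X ω, Y ω)) (a, b) ≤ prob p Y b := by
  rw [← marginal_snd X Y b]
  exact Finset.single_le_sum (f := fun a' => prob p (fun ω => (X ω, Y ω)) (a', b))
    (fun a' _ => prob_nonneg hp _ _) (Finset.mem_univ a)

lemma prob_comp_inj {g : A → C} (hg : Function.Injective g) (X : Ω → A) (a : A) :
    prob p (fun ω => g (X ω)) (g a) = prob p X a := by
  unfold prob
  exact Finset.sum_congr rfl fun ω _ => by simp [hg.eq_iff]

lemma prob_comp_not_mem {g : A → C} (X : Ω → A) {c : C} (hc : c ∉ Set.range g) :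
    prob p (fun ω => g (X ω)) c = 0 := by
  unfold prob
  refine Finset.sum_eq_zero fun ω _ => ?_
  rw [if_neg]
  exact fun h => hc ⟨X ω, h⟩

lemma ent_comp_inj {g : A → C} (hg : Function.Injective g) (X : Ω → A) :
    ent p (fun ω => g (X ω)) = ent p X := by
  unfold ent
  congr 1
  have h1 : ∑ c, prob p (fun ω => g (X ω)) c * Real.log (prob p (fun ω => g (X ω)) c)
      = ∑ c ∈ Finset.univ.image g,
          prob p (fun ω => g (X ω)) c * Real.log (prob p (fun ω => g (X ω)) c) := by
    refine (Finset.sum_subset (Finset.subset_univ _) fun c _ hc => ?_).symm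
    have : c ∉ Set.range g := by
      intro ⟨a, ha⟩
      exact hc (Finset.mem_image.mpr ⟨a, Finset.mem_univ a, ha⟩)
    rw [prob_comp_not_mem X this]
    simp
  rw [h1, Finset.sum_image (fun a _ a' _ h => hg h)]
  exact Finset.sum_congr rfl fun a _ => by rw [prob_comp_inj hg]

lemma ent_snd_le (hp : IsPMF p) (X : Ω → A) (Y : Ω → B) :
    ent p Y ≤ ent p (fun ω => (X ω, Y ω)) := by
  unfold ent
  rw [neg_le_neg_iff]
  calc ∑ ab : A × B, prob p (fun ω => (X ω, Y ω)) ab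
          * Real.log (prob p (fun ω => (X ω, Y ω)) ab)
      ≤ ∑ ab : A × B, prob p (fun ω => (X ω, Y ω)) ab * Real.log (prob p Y ab.2) := by
        refine Finset.sum_le_sum fun ab _ => ?_
        rcases (prob_nonneg hp (fun ω => (X ω, Y ω)) ab).eq_or_lt with h | h
        · rw [← h]; simp
        · refine mul_le_mul_of_nonneg_left (Real.log_le_log h ?_) h.le
          obtain ⟨a, b⟩ := ab
          exact prob_pair_le_snd hp X Y a b
    _ = ∑ b, prob p Y b * Real.log (prob p Y b) := by
        rw [Fintype.sum_prod_type, Finset.sum_comm]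
        refine Finset.sum_congr rfl fun b _ => ?_
        show ∑ a, prob p (fun ω => (X ω, Y ω)) (a, b) * Real.log (prob p Y b) = _
        rw [← Finset.sum_mul, marginal_snd]

lemma ent_fst_le (hp : IsPMF p) (X : Ω → A) (Y : Ω → B) :
    ent p X ≤ ent p (fun ω => (X ω, Y ω)) := by
  have h := ent_snd_le hp Y X
  have hswap : ent p (fun ω => (Y ω, X ω)) = ent p (fun ω => (X ω, Y ω)) := by
    have hg : Function.Injective (Prod.swap : A × B → B × A) := Prod.swap_injective
    exact ent_comp_inj hg (fun ω => (X ω, Y ω))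
  linarith

lemma ent_pair_le (hp : IsPMF p) (X : Ω → A) (Y : Ω → B) :
    ent p (fun ω => (X ω, Y ω)) ≤ ent p X + ent p Y := by
  set r : A × B → ℝ := prob p (fun ω => (X ω, Y ω)) with hr
  have hrn : ∀ ab, 0 ≤ r ab := fun ab => prob_nonneg hp _ _
  have hrf : ∀ a b, r (a, b) ≤ prob p X a := fun a b => prob_pair_le_fst hp X Y a b
  have hrs : ∀ a b, r (a, b) ≤ prob p Y b := fun a b => prob_pair_le_snd hp X Y a b
  -- Gibbs: ∑ r log q ≤ ∑ r log r where q (a,b) = px a * py b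
  have gibbs : ∑ ab : A × B, r ab * Real.log (prob p X ab.1 * prob p Y ab.2)
      ≤ ∑ ab : A × B, r ab * Real.log (r ab) := by
    have key : ∀ ab : A × B, r ab * Real.log (prob p X ab.1 * prob p Y ab.2)
        - r ab * Real.log (r ab) ≤ prob p X ab.1 * prob p Y ab.2 - r ab := by
      rintro ⟨a, b⟩
      rcases (hrn (a, b)).eq_or_lt with h | h
      · rw [← h]
        simp only [zero_mul, sub_zero, sub_self, sub_zero]
        exact mul_nonneg (prob_nonneg hp X a) (prob_nonneg hp Y b)
      · have hq : 0 < prob p X a * prob p Y b :=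
          mul_pos (lt_of_lt_of_le h (hrf a b)) (lt_of_lt_of_le h (hrs a b))
        have hlog := Real.log_le_sub_one_of_pos (div_pos hq h)
        rw [Real.log_div hq.ne' h.ne'] at hlog
        have := mul_le_mul_of_nonneg_left hlog (hrn (a, b))
        rw [mul_sub] at this
        calc r (a, b) * Real.log (prob p X a * prob p Y b) - r (a, b) * Real.log (r (a, b))
            = r (a, b) * (Real.log (prob p X a * prob p Y b) - Real.log (r (a, b))) := by ring
          _ ≤ r (a, b) * (prob p X a * prob p Y b / r (a, b) - 1) :=
              mul_le_mul_of_nonneg_left hlog (hrn (a, b))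
          _ = prob p X a * prob p Y b - r (a, b) := by field_simp
      -- end
    have hsum := Finset.sum_le_sum fun ab (_ : ab ∈ Finset.univ) => key ab
    rw [Finset.sum_sub_distrib, Finset.sum_sub_distrib] at hsum
    have hq1 : ∑ ab : A × B, prob p X ab.1 * prob p Y ab.2 = 1 := by
      rw [Fintype.sum_prod_type]
      simp only [← Finset.mul_sum, sum_prob hp Y, mul_one, sum_prob hp X]
    have hr1 : ∑ ab : A × B, r ab = 1 := by
      rw [hr]
      have := sum_prob hp (fun ω => (X ω, Y ω))
      exact this
    rw [hq1, hr1] at hsum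
    linarith
  -- split log q
  have hsplit : ∑ ab : A × B, r ab * Real.log (prob p X ab.1 * prob p Y ab.2)
      = (∑ a, prob p X a * Real.log (prob p X a)) + ∑ b, prob p Y b * Real.log (prob p Y b) := by
    have key : ∀ ab : A × B, r ab * Real.log (prob p X ab.1 * prob p Y ab.2)
        = r ab * Real.log (prob p X ab.1) + r ab * Real.log (prob p Y ab.2) := by
      rintro ⟨a, b⟩
      rcases (hrn (a, b)).eq_or_lt with h | h
      · rw [← h]; ring
      · have h1 : prob p X a ≠ 0 := (lt_of_lt_of_le h (hrf a b)).ne'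
        have h2 : prob p Y b ≠ 0 := (lt_of_lt_of_le h (hrs a b)).ne'
        rw [Real.log_mul h1 h2]; ring
    rw [Finset.sum_congr rfl fun ab _ => key ab, Finset.sum_add_distrib]
    congr 1
    · rw [Fintype.sum_prod_type]
      refine Finset.sum_congr rfl fun a _ => ?_
      show ∑ b, prob p (fun ω => (X ω, Y ω)) (a, b) * Real.log (prob p X a) = _
      rw [← Finset.sum_mul, marginal_fst]
    · rw [Fintype.sum_prod_type, Finset.sum_comm]
      refine Finset.sum_congr rfl fun b _ => ?_
      show ∑ a, prob p (fun ω => (X ω, Y ω)) (a, b) * Real.log (prob p Y b) = _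
      rw [← Finset.sum_mul, marginal_snd]
  unfold ent
  rw [← hr]
  linarith [hsplit ▸ gibbs]

lemma ent_const (hp : IsPMF p) (c : A) : ent p (fun _ => c) = 0 := by
  unfold ent prob
  rw [neg_eq_zero]
  refine Finset.sum_eq_zero fun a _ => ?_
  by_cases h : c = a <;> simp [h, hp.sum_one]

lemma ent_indep_eq (hp : IsPMF p) (X : Ω → A) (Y : Ω → B)
    (h : ∀ a b, prob p (fun ω => (X ω, Y ω)) (a, b) = prob p X a * prob p Y b) :
    ent p (fun ω => (X ω, Y ω)) = ent p X + ent p Y := by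
  unfold ent
  rw [← neg_add]
  congr 1
  rw [Fintype.sum_prod_type]
  have step : ∀ a b, prob p X a * prob p Y b * Real.log (prob p X a * prob p Y b)
      = prob p Y b * (prob p X a * Real.log (prob p X a))
        + prob p X a * (prob p Y b * Real.log (prob p Y b)) := by
    intro a b
    rcases eq_or_ne (prob p X a) 0 with h0 | h0
    · simp [h0]
    rcases eq_or_ne (prob p Y b) 0 with h1 | h1
    · simp [h1]
    rw [Real.log_mul h0 h1]; ring
  calc ∑ a, ∑ b, prob p (fun ω => (X ω, Y ω)) (a, b)
          * Real.log (prob p (fun ω => (X ω, Y ω)) (a, b))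
      = ∑ a, ∑ b, (prob p Y b * (prob p X a * Real.log (prob p X a))
          + prob p X a * (prob p Y b * Real.log (prob p Y b))) := by
        refine Finset.sum_congr rfl fun a _ => Finset.sum_congr rfl fun b _ => ?_
        rw [h a b, step a b]
    _ = (∑ a, prob p X a * Real.log (prob p X a)) + ∑ b, prob p Y b * Real.log (prob p Y b) := by
        simp only [Finset.sum_add_distrib, ← Finset.sum_mul, ← Finset.mul_sum]
        rw [sum_prob hp X, sum_prob hp Y]
        ring

lemma ent_tuple_le (hp : IsPMF p) {𝒴 : Type*} [Fintype 𝒴] [DecidableEq 𝒴] :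
    ∀ (m : ℕ) (Z : Fin m → Ω → 𝒴),
      ent p (fun ω => fun i => Z i ω) ≤ ∑ i, ent p (Z i) := by
  intro m
  induction m with
  | zero =>
    intro Z
    have : (fun ω => fun i : Fin 0 => Z i ω) = fun _ => (fun i : Fin 0 => i.elim0) :=
      funext fun ω => Subsingleton.elim _ _
    rw [this, ent_const hp]
    simp
  | succ m ih =>
    intro Z
    have hg : Function.Injective
        (fun v : Fin (m + 1) → 𝒴 => (v (Fin.last m), fun i : Fin m => v i.castSucc)) := by
      intro v w h
      rw [Prod.ext_iff] at h
      funext i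
      refine Fin.lastCases h.1 (fun j => congrFun h.2 j) i
    have heq : ent p (fun ω => fun i : Fin (m + 1) => Z i ω)
        = ent p (fun ω => (Z (Fin.last m) ω, fun i : Fin m => Z i.castSucc ω)) :=
      (ent_comp_inj hg (fun ω => fun i => Z i ω)).symm
    calc ent p (fun ω => fun i : Fin (m + 1) => Z i ω)
        = ent p (fun ω => (Z (Fin.last m) ω, fun i : Fin m => Z i.castSucc ω)) := heq
      _ ≤ ent p (Z (Fin.last m)) + ent p (fun ω => fun i : Fin m => Z i.castSucc ω) :=
          ent_pair_le hp _ _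
      _ ≤ ent p (Z (Fin.last m)) + ∑ i : Fin m, ent p (Z i.castSucc) := by
          have := ih (fun i => Z i.castSucc)
          linarith
      _ = ∑ i : Fin (m + 1), ent p (Z i) := by
          rw [Fin.sum_univ_castSucc]
          ring

end Aux

/-- Sum-rate converse: with independent messages of entropies `nR1`, `nR2`,
Fano bounds `H(M2|Yⁿ) ≤ nε` and `H(M1|Yⁿ,M2) ≤ nε`, Markov chains
`(M1,M2,Y^{i-1}) → Xᵢ → Yᵢ` and `Yᵢ = f(Xᵢ)` deterministic,
one has `n(R1+R2) ≤ ∑ᵢ H(Yᵢ) + 2nε`. -/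
theorem statement13 {Ω : Type*} [Fintype Ω] {p : Ω → ℝ} (hp : IsPMF p)
    {A B 𝒳 𝒴 : Type*} [Fintype A] [DecidableEq A] [Fintype B] [DecidableEq B]
    [Fintype 𝒳] [DecidableEq 𝒳] [Fintype 𝒴] [DecidableEq 𝒴]
    (n : ℕ) (M1 : Ω → A) (M2 : Ω → B) (X : Fin n → Ω → 𝒳) (Y : Fin n → Ω → 𝒴)
    (f : 𝒳 → 𝒴) (R1 R2 ε : ℝ) (hε : 0 ≤ ε)
    (hindep : IndepRV p M1 M2)
    (hent1 : ent p M1 = n * R1)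
    (hent2 : ent p M2 = n * R2)
    (hdet : ∀ i ω, Y i ω = f (X i ω))
    (hmarkov : ∀ i : Fin n,
      MarkovChain p
        (fun ω => (M1 ω, M2 ω, (fun j : {j : Fin n // j < i} => Y j ω)))
        (X i) (Y i))
    (hFano2 : condEnt p M2 (fun ω => fun i => Y i ω) ≤ n * ε)
    (hFano1 : condEnt p M1 (fun ω => ((fun i => Y i ω), M2 ω)) ≤ n * ε) :
    (n : ℝ) * (R1 + R2) ≤ (∑ i, ent p (Y i)) + 2 * n * ε := by
  -- H(M1) + H(M2) = H(M1, M2)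
  have h1 : ent p (fun ω => (M1 ω, M2 ω)) = (n : ℝ) * R1 + (n : ℝ) * R2 := by
    rw [ent_indep_eq hp M1 M2 hindep, hent1, hent2]
  -- H(M1, M2) ≤ H(Yⁿ, (M1, M2))
  have h2 : ent p (fun ω => (M1 ω, M2 ω))
      ≤ ent p (fun ω => ((fun i => Y i ω), (M1 ω, M2 ω))) :=
    ent_snd_le hp _ _
  -- regroup: H(Yⁿ, (M1, M2)) = H(M1, (Yⁿ, M2))
  have h3 : ent p (fun ω => ((fun i => Y i ω), (M1 ω, M2 ω)))
      = ent p (fun ω => (M1 ω, ((fun i => Y i ω), M2 ω))) := by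
    have hg : Function.Injective
        (fun z : (Fin n → 𝒴) × (A × B) => (z.2.1, (z.1, z.2.2))) := by
      rintro ⟨y, a, b⟩ ⟨y', a', b'⟩ h
      simp only [Prod.mk.injEq] at h
      simp [h.1, h.2.1, h.2.2]
    exact (ent_comp_inj hg (fun ω => ((fun i => Y i ω), (M1 ω, M2 ω)))).symm
  -- chain rule step 1
  have h4 : ent p (fun ω => (M1 ω, ((fun i => Y i ω), M2 ω)))
      = condEnt p M1 (fun ω => ((fun i => Y i ω), M2 ω))
        + ent p (fun ω => ((fun i => Y i ω), M2 ω)) := by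
    unfold condEnt
    ring
  -- swap: H(Yⁿ, M2) = H(M2, Yⁿ)
  have h5 : ent p (fun ω => ((fun i => Y i ω), M2 ω))
      = ent p (fun ω => (M2 ω, (fun i => Y i ω))) := by
    have hg : Function.Injective (Prod.swap : ((Fin n → 𝒴) × B) → B × (Fin n → 𝒴)) :=
      Prod.swap_injective
    exact (ent_comp_inj hg (fun ω => ((fun i => Y i ω), M2 ω))).symm
  -- chain rule step 2
  have h6 : ent p (fun ω => (M2 ω, (fun i => Y i ω)))
      = condEnt p M2 (fun ω => fun i => Y i ω) + ent p (fun ω => fun i => Y i ω) := by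
    unfold condEnt
    ring
  -- subadditivity
  have h7 : ent p (fun ω => fun i => Y i ω) ≤ ∑ i, ent p (Y i) :=
    ent_tuple_le hp n Y
  linarith

end SecBC
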